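/- Let κ be a singular cardinal with cf(κ) = λ < κ. Suppose there exists a normal transitive coloring d : [κ⁺]^2 → λ that is approachable on E ∩ {δ < κ⁺ : cf(δ) = λ⁺} for some club E ⊆ κ⁺. Then κ⁺ does not satisfy κ⁺ →^poly (λ⁺)^2_{<κ-bdd}: the coloring f(α,β) = (d(α,β), β) is <κ-bounded and admits no rainbow subset of order type λ⁺ contained in E. -/

import Mathlib

open Ordinal Set Cardinal

/-- `C` is a club (closed unbounded) subset of the ordinal `o`. -/
def IsClubIn (C : Set Ordinal) (o : Ordinal) : Prop :=
  C ⊆ Set.Iio o ∧ (∀ α < o, ∃ β ∈ C, α < β) ∧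
    (∀ α < o, Order.IsSuccLimit α → (∀ β < α, ∃ γ ∈ C, β < γ ∧ γ < α) → α ∈ C)

/-- `S` is stationary in the ordinal `o`. -/
def IsStatIn (S : Set Ordinal) (o : Ordinal) : Prop :=
  ∀ C : Set Ordinal, IsClubIn C o → (S ∩ C).Nonempty

/-- If `κ` is singular with `cf(κ) = λ` and there is a normal transitive
coloring `d : [κ⁺]² → λ` approachable on `E ∩ cof(λ⁺)` for a club `E ⊆ κ⁺`,
then `κ⁺ ↛^poly (λ⁺)²_{<κ-bdd}`: the induced coloring `f(α,β) = (d(α,β),β)` is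
`<κ`-bounded and has no rainbow subset of order type `λ⁺` contained in `E`. -/
theorem approachable_implies_neg_poly (κ : Cardinal.{0}) (hκ : ℵ₀ ≤ κ)
    (hsing : (κ.ord).cof < κ)
    (d : Ordinal → Ordinal → Ordinal)
    (hval : ∀ α β, α < β → β < (Order.succ κ).ord → d α β < ((κ.ord).cof).ord)
    -- d is normal :
    (hnormal : ∀ i < ((κ.ord).cof).ord, ∃ μ : Cardinal.{0}, μ < κ ∧
      ∀ α < (Order.succ κ).ord,
        (#{β : Ordinal // β < α ∧ d β α < i}) ≤ Cardinal.lift.{1} μ)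
    -- d is transitive :
    (htrans : ∀ α γ β, α < γ → γ < β → β < (Order.succ κ).ord →
      d α β ≤ max (d α γ) (d γ β))
    (E : Set Ordinal) (hE : IsClubIn E (Order.succ κ).ord)
    -- d is approachable on E ∩ cof(λ⁺) :
    (happr : ∀ δ ∈ E, δ < (Order.succ κ).ord →
      δ.cof = Order.succ ((κ.ord).cof) →
      ∃ A : Set Ordinal, A ⊆ Set.Iio δ ∧ (∀ x < δ, ∃ y ∈ A, x < y) ∧
        ∀ α ∈ A, ∃ η < ((κ.ord).cof).ord, ∀ β ∈ A, β < α → d β α ≤ η) :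
    -- the coloring f(α,β) = (d(α,β), β) is <κ-bounded :
    (∀ ξ β, β < (Order.succ κ).ord →
      (#{α : Ordinal // α < β ∧ d α β = ξ}) < Cardinal.lift.{1} κ) ∧
    -- and f admits no rainbow subset of order type λ⁺ contained in E :
    (∀ h : Ordinal → Ordinal,
      StrictMonoOn h (Set.Iio (Order.succ ((κ.ord).cof)).ord) →
      (∀ j < (Order.succ ((κ.ord).cof)).ord, h j < (Order.succ κ).ord ∧ h j ∈ E) →
      ∃ i i' j, i < i' ∧ i' < j ∧ j < (Order.succ ((κ.ord).cof)).ord ∧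
        d (h i) (h j) = d (h i') (h j)) := by
  have hlc0 : ℵ₀ ≤ (κ.ord).cof := Ordinal.aleph0_le_cof.2 (Cardinal.isSuccLimit_ord hκ)
  constructor
  · -- boundedness
    intro ξ β hβ
    by_cases hξ : ξ < ((κ.ord).cof).ord
    · have hξ1 : Order.succ ξ < ((κ.ord).cof).ord := (Cardinal.isSuccLimit_ord hlc0).succ_lt hξ
      obtain ⟨μ, hμκ, hμ⟩ := hnormal (Order.succ ξ) hξ1
      refine lt_of_le_of_lt (le_trans ?_ (hμ β hβ)) (Cardinal.lift_lt.2 hμκ)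
      apply Cardinal.mk_subtype_mono
      rintro α ⟨h1, h2⟩
      exact ⟨h1, h2 ▸ Order.lt_succ ξ⟩
    · have : IsEmpty {α : Ordinal // α < β ∧ d α β = ξ} := by
        refine ⟨fun x => hξ ?_⟩
        obtain ⟨α, h1, h2⟩ := x
        exact h2 ▸ hval α β h1 hβ
      rw [Cardinal.mk_eq_zero]
      have h0 : Cardinal.lift.{1} 0 < Cardinal.lift.{1} κ :=
        Cardinal.lift_lt.2 (aleph0_pos.trans_le hκ)
      simpa using h0
  · -- no rainbow subset
    intro h hmono hh
    set lc := (κ.ord).cof with hlcdef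
    set Λ := (Order.succ lc).ord with hΛdef
    set K := (Order.succ κ).ord with hKdef
    have hΛlim : Order.IsSuccLimit Λ := Cardinal.isSuccLimit_ord (hlc0.trans (Order.le_succ lc))
    have hΛcof : Λ.cof = Order.succ lc := (Cardinal.isRegular_succ hlc0).cof_eq
    have hKcof : K.cof = Order.succ κ := (Cardinal.isRegular_succ hκ).cof_eq
    have hslcκ : Order.succ lc < Order.succ κ :=
      lt_of_le_of_lt (Order.succ_le_of_lt hsing) (Order.lt_succ κ)
    set T := Λ.ToType with hTdef
    have hTcard : #T = Order.succ lc := by rw [hTdef, Cardinal.mk_toType, hΛdef, Cardinal.card_ord]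
    set q : T → Ordinal := fun t => (((Ordinal.ToType.mk (o := Λ)).symm t : Set.Iio Λ) : Ordinal) with hqdef
    have hq : ∀ t, q t < Λ := fun t => ((Ordinal.ToType.mk (o := Λ)).symm t).2
    have hqsurj : ∀ j, j < Λ → ∃ t, q t = j := by
      intro j hj
      refine ⟨Ordinal.ToType.mk (o := Λ) ⟨j, hj⟩, ?_⟩
      rw [hqdef]
      simp
    set g : T → Ordinal := fun t => h (q t) with hgdef
    have hgE : ∀ t, g t ∈ E := fun t => (hh (q t) (hq t)).2
    have hgK : ∀ t, g t < K := fun t => (hh (q t) (hq t)).1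
    set δ := iSup g with hδdef
    have hδK : δ < K := by
      refine Ordinal.iSup_lt_ord ?_ hgK
      rw [hTcard, hKcof]
      exact hslcκ
    have hhδ : ∀ j, j < Λ → h j < δ := by
      intro j hj
      have hj1 : Order.succ j < Λ := hΛlim.succ_lt hj
      have h1 : h j < h (Order.succ j) := hmono hj hj1 (Order.lt_succ j)
      obtain ⟨t, ht⟩ := hqsurj _ hj1
      have h2 : g t ≤ δ := Ordinal.le_iSup g t
      rw [hgdef] at h2
      simp only [ht] at h2
      exact lt_of_lt_of_le h1 h2
    have hcofinal : ∀ x, x < δ → ∃ j, j < Λ ∧ x < h j := by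
      intro x hx
      rw [hδdef, Ordinal.lt_iSup_iff] at hx
      obtain ⟨t, ht⟩ := hx
      exact ⟨q t, hq t, ht⟩
    have hδcof_ge : Order.succ lc ≤ δ.cof := by
      obtain ⟨ι, f, hlsub, hι⟩ := Ordinal.exists_lsub_cof δ
      have hfδ : ∀ i, f i < δ := fun i => hlsub ▸ Ordinal.lt_lsub f i
      choose m hm1 hm2 using fun i => hcofinal (f i) (hfδ i)
      have hΛle : Λ ≤ Ordinal.lsub m := by
        by_contra hcon
        push_neg at hcon
        have hhj : h (Ordinal.lsub m) < δ := hhδ _ hcon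
        rw [← hlsub, Ordinal.lt_lsub_iff] at hhj
        obtain ⟨i, hi⟩ := hhj
        have h1 : h (Ordinal.lsub m) < h (m i) := lt_of_le_of_lt hi (hm2 i)
        have h2 : Ordinal.lsub m < m i := (hmono.lt_iff_lt hcon (hm1 i)).1 h1
        exact absurd h2 (not_lt.2 (Ordinal.lt_lsub m i).le)
      have hΛm : Λ = Ordinal.lsub m := le_antisymm hΛle (Ordinal.lsub_le hm1)
      calc Order.succ lc = Λ.cof := hΛcof.symm
        _ = (Ordinal.lsub m).cof := by rw [← hΛm]
        _ ≤ #ι := Ordinal.cof_lsub_le m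
        _ = δ.cof := hι
    have hδcof_le : δ.cof ≤ Order.succ lc := by
      have hgδ : ∀ t, g t < δ := fun t => hhδ (q t) (hq t)
      have hlsubg : Ordinal.lsub g = δ := by
        refine le_antisymm (Ordinal.lsub_le hgδ) ?_
        exact Ordinal.iSup_le fun t => (Ordinal.lt_lsub g t).le
      calc δ.cof = (Ordinal.lsub g).cof := by rw [hlsubg]
        _ ≤ #T := Ordinal.cof_lsub_le g
        _ = Order.succ lc := hTcard
    have hδcof : δ.cof = Order.succ lc := le_antisymm hδcof_le hδcof_ge
    have hδlim : Order.IsSuccLimit δ := Ordinal.aleph0_le_cof.1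
      (by rw [hδcof]; exact hlc0.trans (Order.le_succ lc))
    have hδE : δ ∈ E := by
      refine hE.2.2 δ hδK hδlim ?_
      intro β hβ
      obtain ⟨j, hjΛ, hjβ⟩ := hcofinal β hβ
      exact ⟨h j, (hh j hjΛ).2, hjβ, hhδ j hjΛ⟩
    obtain ⟨A, hA1, hA2, hA3⟩ := happr δ hδE hδK hδcof
    have haex : ∀ j : Ordinal, ∃ y, j < Λ → y ∈ A ∧ h j < y := by
      intro j
      by_cases hj : j < Λ
      · obtain ⟨y, hy1, hy2⟩ := hA2 (h j) (hhδ j hj)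
        exact ⟨y, fun _ => ⟨hy1, hy2⟩⟩
      · exact ⟨0, fun hc => absurd hc hj⟩
    choose a ha using haex
    have hnex : ∀ j : Ordinal, ∃ j', j < Λ → j' < Λ ∧ a j < h j' := by
      intro j
      by_cases hj : j < Λ
      · obtain ⟨j', hj1, hj2⟩ := hcofinal (a j) (hA1 (ha j hj).1)
        exact ⟨j', fun _ => ⟨hj1, hj2⟩⟩
      · exact ⟨0, fun hc => absurd hc hj⟩
    choose n hn using hnex
    have hjltn : ∀ j, j < Λ → j < n j := by
      intro j hj
      have h1 : h j < h (n j) := lt_trans (ha j hj).2 (hn j hj).2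
      exact (hmono.lt_iff_lt hj (hn j hj).1).1 h1
    -- pigeonhole : some color u has a large fiber
    haveI hne : Nonempty (Set.Iio lc.ord) := by
      refine ⟨⟨0, ?_⟩⟩
      show (0:Ordinal) < lc.ord
      rw [Cardinal.lt_ord]
      simpa using aleph0_pos.trans_le hlc0
    have hfib : ∃ u, u < lc.ord ∧
        Cardinal.lift.{1} lc ≤ #{j : Ordinal | j < Λ ∧ d (h j) (a j) = u} := by
      by_contra hcon
      push_neg at hcon
      have hcover : Set.Iio Λ ⊆
          ⋃ (u : Set.Iio lc.ord), {j : Ordinal | j < Λ ∧ d (h j) (a j) = u.1} := by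
        intro j hj
        have hjΛ : j < Λ := hj
        have hdu : d (h j) (a j) < lc.ord :=
          hval _ _ (ha j hjΛ).2 (lt_trans (hA1 (ha j hjΛ).1) hδK)
        exact Set.mem_iUnion.2 ⟨⟨d (h j) (a j), hdu⟩, hjΛ, rfl⟩
      have h1 : #(Set.Iio Λ) ≤
          #(⋃ (u : Set.Iio lc.ord), {j : Ordinal | j < Λ ∧ d (h j) (a j) = u.1}) :=
        Cardinal.mk_le_mk_of_subset hcover
      have h2 := Cardinal.mk_iUnion_le
        (fun u : Set.Iio lc.ord => {j : Ordinal | j < Λ ∧ d (h j) (a j) = u.1})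
      have h3 : #(Set.Iio lc.ord) = Cardinal.lift.{1} lc := by
        rw [Ordinal.mk_Iio_ordinal, Cardinal.card_ord]
      have h4 : (⨆ u : Set.Iio lc.ord, #{j : Ordinal | j < Λ ∧ d (h j) (a j) = u.1})
          ≤ Cardinal.lift.{1} lc := by
        refine ciSup_le' ?_
        intro u
        exact (hcon u.1 u.2).le
      have h5 : #(Set.Iio Λ) = Cardinal.lift.{1} (Order.succ lc) := by
        rw [Ordinal.mk_Iio_ordinal, hΛdef, Cardinal.card_ord]
      have h6 : Cardinal.lift.{1} (Order.succ lc) ≤ Cardinal.lift.{1} lc := by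
        calc Cardinal.lift.{1} (Order.succ lc) = #(Set.Iio Λ) := h5.symm
          _ ≤ _ := h1
          _ ≤ _ := h2
          _ ≤ Cardinal.lift.{1} lc * Cardinal.lift.{1} lc := mul_le_mul' h3.le h4
          _ = Cardinal.lift.{1} (lc * lc) := (Cardinal.lift_mul lc lc).symm
          _ = Cardinal.lift.{1} lc := by rw [Cardinal.mul_eq_self hlc0]
      exact absurd (Cardinal.lift_le.1 h6) (not_le.2 (Order.lt_succ lc))
    obtain ⟨u, huc, hu⟩ := hfib
    set S := lc.ord.ToType with hSdef
    have hScard : #S = lc := by rw [hSdef, Cardinal.mk_toType, Cardinal.card_ord]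
    have hemb : Nonempty (S ↪ {j : Ordinal | j < Λ ∧ d (h j) (a j) = u}) := by
      rw [← Cardinal.lift_mk_le']
      rw [hScard, Cardinal.lift_uzero]
      exact hu
    obtain ⟨e⟩ := hemb
    set en : S → Ordinal := fun t => (e t).1 with hendef
    have heninj : Function.Injective en := fun t t' htt' => e.injective (Subtype.ext htt')
    have henF : ∀ t, en t < Λ ∧ d (h (en t)) (a (en t)) = u := fun t => (e t).2
    set ρ := iSup (fun t => n (en t)) with hρdef
    have hρΛ : ρ < Λ := by
      refine Ordinal.iSup_lt_ord ?_ (fun t => (hn (en t) (henF t).1).1)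
      rw [hScard, hΛcof]
      exact Order.lt_succ lc
    have hnρle : ∀ t, n (en t) ≤ ρ := fun t => Ordinal.le_iSup _ t
    have haρA : a ρ ∈ A := (ha ρ hρΛ).1
    have hhρa : h ρ < a ρ := (ha ρ hρΛ).2
    have hnρΛ : n ρ < Λ := (hn ρ hρΛ).1
    have haρh : a ρ < h (n ρ) := (hn ρ hρΛ).2
    have hhnρK : h (n ρ) < K := (hh _ hnρΛ).1
    obtain ⟨η, hηlt, hηb⟩ := hA3 (a ρ) haρA
    have hvlt : d (a ρ) (h (n ρ)) < lc.ord := hval _ _ haρh hhnρK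
    set M := max u (max η (d (a ρ) (h (n ρ)))) with hMdef
    have hMlt : M < lc.ord := max_lt huc (max_lt hηlt hvlt)
    have hbound : ∀ t : S, d (h (en t)) (h (n ρ)) ≤ M := by
      intro t
      obtain ⟨htΛ, htu⟩ := henF t
      have h1 : h (en t) < a (en t) := (ha (en t) htΛ).2
      have h2 : a (en t) < a ρ := by
        have h21 : a (en t) < h (n (en t)) := (hn (en t) htΛ).2
        have h22 : h (n (en t)) ≤ h ρ := by
          rcases eq_or_lt_of_le (hnρle t) with heq | hltc
          · rw [heq]
          · exact (hmono ((hn (en t) htΛ).1) hρΛ hltc).le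
        exact lt_of_lt_of_le h21 (le_trans h22 hhρa.le)
      have h3 : a (en t) ∈ A := (ha (en t) htΛ).1
      have hd2 : d (a (en t)) (h (n ρ)) ≤ max η (d (a ρ) (h (n ρ))) := by
        refine le_trans (htrans _ (a ρ) _ h2 haρh hhnρK) ?_
        exact max_le_max (hηb _ h3 h2) le_rfl
      refine le_trans (htrans _ (a (en t)) _ h1 (h2.trans haρh) hhnρK) ?_
      rw [hMdef]
      exact max_le_max htu.le hd2
    have hninj : ¬ Function.Injective (fun t : S => d (h (en t)) (h (n ρ))) := by
      intro hinj
      have hle : Cardinal.lift.{1} #S ≤ Cardinal.lift.{0} #(Set.Iic M) := by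
        refine Cardinal.lift_mk_le'.2 ?_
        exact ⟨⟨fun t => ⟨d (h (en t)) (h (n ρ)), hbound t⟩,
          fun t t' htt' => hinj (congrArg Subtype.val htt')⟩⟩
      rw [hScard, Cardinal.lift_uzero] at hle
      have hset : Set.Iic M = Set.Iio (Order.succ M) := by
        ext x
        simp [Order.lt_succ_iff]
      have hIic : #(Set.Iic M) = Cardinal.lift.{1} (Order.succ M).card := by
        rw [hset]
        exact Ordinal.mk_Iio_ordinal _
      rw [hIic, Cardinal.lift_le] at hle
      have hcontra : (Order.succ M).card < lc :=
        Cardinal.lt_ord.1 ((Cardinal.isSuccLimit_ord hlc0).succ_lt hMlt)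
      exact absurd hle (not_le.2 hcontra)
    rw [Function.not_injective_iff] at hninj
    obtain ⟨t, t', hdd, htne⟩ := hninj
    have hent' : ∀ s : S, en s < n ρ := by
      intro s
      exact lt_trans (lt_of_lt_of_le (hjltn _ (henF s).1) (hnρle s)) (hjltn ρ hρΛ)
    have hne2 : en t ≠ en t' := fun hcon => htne (heninj hcon)
    rcases hne2.lt_or_gt with hlt | hlt
    · exact ⟨en t, en t', n ρ, hlt, hent' t', hnρΛ, hdd⟩
    · exact ⟨en t', en t, n ρ, hlt, hent' t, hnρΛ, hdd.symm⟩
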